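/- For every ε > 0 there exists a constant c > 0 with the following property: for every M there exist an integer n and a family F of n sets whose Venn diagram V(F) has size m ≥ M such that every IE-vector x for F satisfies ‖x‖₁ ≥ c · m^{2−ε}. -/

import Mathlib

open Finset
open scoped Classical

variable {ι S : Type*}

def region (F : ι → Set S) (τ : Finset ι) : Set S :=
  (⋂ i ∈ τ, F i) \ ⋃ i ∉ τ, F i

def venn (F : ι → Set S) : Set (Finset ι) :=
  {τ | τ.Nonempty ∧ (region F τ).Nonempty}

def nerve (F : ι → Set S) : Set (Finset ι) :=
  {σ | σ.Nonempty ∧ (⋂ i ∈ σ, F i).Nonempty}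

def IsIEVector (F : ι → Set S) (x : Finset ι → ℝ) : Prop :=
  (∀ σ, σ ∉ nerve F → x σ = 0) ∧
  ∀ τ ∈ venn F, (∑ σ ∈ τ.powerset.filter (· ∈ nerve F), x σ) = 1

noncomputable section IEAux

open Module Submodule

abbrev Vd (d : ℕ) := Fin d → ZMod 2

abbrev SMod (d : ℕ) := Submodule (ZMod 2) (Vd d)

noncomputable instance (d : ℕ) : Fintype (SMod d) := by
  have : Finite (SMod d) :=
    Finite.of_injective (fun W => (W : Set (Vd d))) SetLike.coe_injective
  exact Fintype.ofFinite _

variable {d : ℕ}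

/-- abbreviation for finrank of a submodule -/
def frk (W : SMod d) : ℕ := Module.finrank (ZMod 2) W

lemma zmod2_cases (a : ZMod 2) : a = 0 ∨ a = 1 := by revert a; decide

lemma frk_top : frk (⊤ : SMod d) = d := by
  rw [frk, finrank_top, Module.finrank_pi, Fintype.card_fin]

lemma frk_le (W : SMod d) : frk W ≤ d := by
  have := Submodule.finrank_le W
  rwa [Module.finrank_pi, Fintype.card_fin] at this

lemma card_submod (W : SMod d) : (univ.filter (· ∈ W)).card = 2 ^ frk W := by
  rw [← Fintype.card_subtype]
  rw [card_eq_pow_finrank (K := ZMod 2) (V := W), ZMod.card]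
  rfl


lemma zmod2_ne_zero {a : ZMod 2} (h : a ≠ 0) : a = 1 := (zmod2_cases a).resolve_left h

lemma exists_functional (U : SMod d) (v : Vd d) (hv : v ∉ U) :
    ∃ φ : Vd d →ₗ[ZMod 2] ZMod 2, U ≤ LinearMap.ker φ ∧ φ v = 1 := by
  have hQ : (Submodule.Quotient.mk v : Vd d ⧸ U) ≠ 0 := by
    simpa [Submodule.Quotient.mk_eq_zero] using hv
  have : ¬ ∀ ψ : Module.Dual (ZMod 2) (Vd d ⧸ U), ψ (Submodule.Quotient.mk v) = 0 := by
    rw [Module.forall_dual_apply_eq_zero_iff]; exact hQ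
  push_neg at this
  obtain ⟨ψ, hψ⟩ := this
  refine ⟨ψ ∘ₗ U.mkQ, ?_, ?_⟩
  · intro u hu
    simp [LinearMap.mem_ker, Submodule.mkQ_apply, (Submodule.Quotient.mk_eq_zero U).mpr hu]
  · exact zmod2_ne_zero (by simpa using hψ)

lemma sup_ker_eq_top {φ : Vd d →ₗ[ZMod 2] ZMod 2} {x : Vd d} (hx : φ x = 1)
    {W : SMod d} (hxW : x ∈ W) : W ⊔ LinearMap.ker φ = ⊤ := by
  rw [eq_top_iff]
  intro z _
  have hz : z - φ z • x ∈ LinearMap.ker φ := by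
    simp [LinearMap.mem_ker, map_sub, map_smul, hx, smul_eq_mul, mul_one]
  exact Submodule.mem_sup.mpr ⟨φ z • x, Submodule.smul_mem _ _ hxW, z - φ z • x, hz, by abel⟩

lemma ker_rank {φ : Vd d →ₗ[ZMod 2] ZMod 2} {x : Vd d} (hx : φ x = 1) :
    frk (LinearMap.ker φ : SMod d) + 1 = d := by
  have hsurj : Function.Surjective φ := by
    intro y
    refine ⟨y • x, ?_⟩
    rw [map_smul, hx, smul_eq_mul, mul_one]
  have h := LinearMap.finrank_range_add_finrank_ker φ
  rw [LinearMap.range_eq_top.mpr hsurj, finrank_top, Module.finrank_self] at h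
  rw [Module.finrank_pi, Fintype.card_fin] at h
  rw [frk]
  omega

lemma rank_inf_ker {φ : Vd d →ₗ[ZMod 2] ZMod 2} {W : SMod d} {x : Vd d}
    (hxW : x ∈ W) (hx : φ x = 1) :
    frk W = frk (W ⊓ LinearMap.ker φ) + 1 := by
  have h := Submodule.finrank_sup_add_finrank_inf_eq W (LinearMap.ker φ)
  rw [sup_ker_eq_top hx hxW, finrank_top, Module.finrank_pi, Fintype.card_fin] at h
  have hk := ker_rank (d := d) hx
  simp only [frk] at hk ⊢
  omega


lemma theta_inf {φ : Vd d →ₗ[ZMod 2] ZMod 2} {W' : SMod d} (hW'k : W' ≤ LinearMap.ker φ)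
    {v : Vd d} (hv : φ v = 1) :
    (W' ⊔ Submodule.span (ZMod 2) {v}) ⊓ LinearMap.ker φ = W' := by
  apply le_antisymm
  · intro z hz
    rw [Submodule.mem_inf] at hz
    obtain ⟨hz1, hz2⟩ := hz
    obtain ⟨w, hw, s, hs, rfl⟩ := Submodule.mem_sup.mp hz1
    obtain ⟨a, rfl⟩ := Submodule.mem_span_singleton.mp hs
    rcases zmod2_cases a with ha | ha
    · simpa [ha] using hw
    · exfalso
      rw [LinearMap.mem_ker, map_add, map_smul, hv, ha, one_smul,
        (LinearMap.mem_ker).mp (hW'k hw), zero_add] at hz2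
      exact one_ne_zero hz2
  · exact le_inf le_sup_left hW'k

lemma mem_theta (W' : SMod d) (v : Vd d) : v ∈ W' ⊔ Submodule.span (ZMod 2) {v} :=
  Submodule.mem_sup_right (Submodule.subset_span rfl)

lemma fiber_count (A : SMod d) (φ : Vd d →ₗ[ZMod 2] ZMod 2) (x₀ : Vd d)
    (hx₀A : x₀ ∈ A) (hx₀ : φ x₀ = 1) (W' : SMod d) (hW'A : W' ≤ A)
    (hW'k : W' ≤ LinearMap.ker φ) :
    ((univ : Finset (SMod d)).filter
        (fun W => W ≤ A ∧ ¬ W ≤ LinearMap.ker φ ∧ W ⊓ LinearMap.ker φ = W')).card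
      * 2 ^ frk W' = 2 ^ (frk A - 1) := by
  set H := LinearMap.ker φ with hH
  set T := (univ : Finset (SMod d)).filter
      (fun W => W ≤ A ∧ ¬ W ≤ H ∧ W ⊓ H = W') with hT
  set X := (univ : Finset (Vd d)).filter (fun v => v ∈ A ∧ φ v = 1) with hX
  have h1 : frk A = frk (A ⊓ H) + 1 := rank_inf_ker hx₀A hx₀
  have hXcard : X.card = 2 ^ (frk A - 1) := by
    have hbij : X.card = ((univ : Finset (Vd d)).filter (· ∈ A ⊓ H)).card := by
      apply Finset.card_bij (fun v _ => v - x₀)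
      · intro v hv
        rw [hX, Finset.mem_filter] at hv
        rw [Finset.mem_filter]
        refine ⟨Finset.mem_univ _, ?_⟩
        rw [Submodule.mem_inf]
        constructor
        · exact Submodule.sub_mem _ hv.2.1 hx₀A
        · rw [hH, LinearMap.mem_ker, map_sub, hv.2.2, hx₀, sub_self]
      · intro v hv v' hv' h
        have := sub_left_injective h
        exact this
      · intro u hu
        rw [Finset.mem_filter, Submodule.mem_inf] at hu
        refine ⟨u + x₀, ?_, by abel⟩
        rw [hX, Finset.mem_filter]
        refine ⟨Finset.mem_univ _, Submodule.add_mem _ hu.2.1 hx₀A, ?_⟩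
        rw [map_add, hx₀, (LinearMap.mem_ker).mp hu.2.2, zero_add]
    rw [hbij, card_submod]
    congr 1
    omega
  have hmap : ∀ v ∈ X, (W' ⊔ Submodule.span (ZMod 2) {v}) ∈ T := by
    intro v hv
    rw [hX, Finset.mem_filter] at hv
    obtain ⟨-, hvA, hv1⟩ := hv
    rw [hT, Finset.mem_filter]
    refine ⟨Finset.mem_univ _, ?_, ?_, theta_inf hW'k hv1⟩
    · exact sup_le hW'A ((Submodule.span_le).mpr (Set.singleton_subset_iff.mpr hvA))
    · intro hle
      have := hle (mem_theta W' v)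
      rw [hH, LinearMap.mem_ker] at this
      rw [hv1] at this
      exact one_ne_zero this
  have hfib : ∀ W ∈ T, (X.filter (fun v => W' ⊔ Submodule.span (ZMod 2) {v} = W)).card
      = 2 ^ frk W' := by
    intro W hW
    rw [hT, Finset.mem_filter] at hW
    obtain ⟨-, hWA, hWH, hWinf⟩ := hW
    obtain ⟨x, hxW, hxH⟩ := SetLike.not_le_iff_exists.mp hWH
    have hx1 : φ x = 1 := zmod2_ne_zero (fun h => hxH ((LinearMap.mem_ker).mpr h))
    have hfrW : frk W = frk W' + 1 := by
      have := rank_inf_ker hxW hx1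
      rwa [← hH, hWinf] at this
    have heqset : X.filter (fun v => W' ⊔ Submodule.span (ZMod 2) {v} = W)
        = (univ : Finset (Vd d)).filter (fun v => v ∈ W ∧ φ v = 1) := by
      ext v
      simp only [hX, Finset.mem_filter, Finset.mem_univ, true_and]
      constructor
      · rintro ⟨⟨hvA, hv1⟩, heq⟩
        exact ⟨heq ▸ mem_theta W' v, hv1⟩
      · rintro ⟨hvW, hv1⟩
        refine ⟨⟨hWA hvW, hv1⟩, ?_⟩
        have hle : W' ⊔ Submodule.span (ZMod 2) {v} ≤ W :=
          sup_le (hWinf ▸ inf_le_left)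
            ((Submodule.span_le).mpr (Set.singleton_subset_iff.mpr hvW))
        have hfr2 : frk (W' ⊔ Submodule.span (ZMod 2) {v}) = frk W' + 1 := by
          have := rank_inf_ker (mem_theta W' v) hv1
          rwa [← hH, theta_inf hW'k hv1] at this
        exact Submodule.eq_of_le_of_finrank_le hle (by rw [frk] at hfrW hfr2; omega)
    rw [heqset]
    have hsplit := Finset.card_filter_add_card_filter_not
      (s := (univ : Finset (Vd d)).filter (· ∈ W)) (p := fun v => φ v = 1)
    rw [Finset.filter_filter, Finset.filter_filter] at hsplit
    have hneg : ((univ : Finset (Vd d)).filter (fun v => v ∈ W ∧ ¬ φ v = 1)).card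
        = 2 ^ frk W' := by
      have : (univ : Finset (Vd d)).filter (fun v => v ∈ W ∧ ¬ φ v = 1)
          = (univ : Finset (Vd d)).filter (· ∈ W ⊓ H) := by
        ext v
        simp only [Finset.mem_filter, Finset.mem_univ, true_and, Submodule.mem_inf]
        constructor
        · rintro ⟨hvW, hv⟩
          refine ⟨hvW, ?_⟩
          rw [hH, LinearMap.mem_ker]
          rcases zmod2_cases (φ v) with h | h
          · exact h
          · exact absurd h hv
        · rintro ⟨hvW, hv⟩
          refine ⟨hvW, ?_⟩
          rw [hH, LinearMap.mem_ker] at hv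
          rw [hv]
          exact zero_ne_one
      rw [this, card_submod, hWinf]
    have hW2 : ((univ : Finset (Vd d)).filter (· ∈ W)).card = 2 ^ (frk W' + 1) := by
      rw [card_submod, hfrW]
    have hpow : (2:ℕ) ^ (frk W' + 1) = 2 ^ frk W' + 2 ^ frk W' := by
      rw [pow_succ]; omega
    omega
  have hcount := Finset.card_eq_sum_card_fiberwise hmap
  rw [Finset.sum_congr rfl hfib, Finset.sum_const, smul_eq_mul] at hcount
  rw [← hXcard, hcount]


def wt (c : ℕ) : ℝ := (-1) ^ c * 2 ^ (c.choose 2)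

lemma wt_succ (c : ℕ) : wt (c + 1) = -(2 ^ c) * wt c := by
  have h : (c + 1).choose 2 = c + c.choose 2 := by
    rw [Nat.choose_succ_succ c 1, Nat.choose_one_right]
  rw [wt, wt, h, pow_succ, pow_add]
  ring

lemma sum_wt_zero (U A : SMod d) (hUA : U ≤ A) (hne : U ≠ A) :
    ∑ W ∈ (univ : Finset (SMod d)).filter (fun W => U ≤ W ∧ W ≤ A),
      wt (frk A - frk W) = 0 := by
  obtain ⟨v, hvA, hvU⟩ := SetLike.exists_of_lt (lt_of_le_of_ne hUA hne)
  obtain ⟨φ, hUk, hv1⟩ := exists_functional U v hvU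
  set H := LinearMap.ker φ with hH
  have hA' : frk A = frk (A ⊓ H) + 1 := rank_inf_ker hvA hv1
  rw [← Finset.sum_filter_add_sum_filter_not
    ((univ : Finset (SMod d)).filter (fun W => U ≤ W ∧ W ≤ A)) (fun W => W ≤ H)]
  set P1 := ((univ : Finset (SMod d)).filter (fun W => U ≤ W ∧ W ≤ A)).filter
    (fun W => W ≤ H) with hP1
  set P2 := ((univ : Finset (SMod d)).filter (fun W => U ≤ W ∧ W ≤ A)).filter
    (fun W => ¬ W ≤ H) with hP2
  have hmemP1 : ∀ W : SMod d, W ∈ P1 ↔ (U ≤ W ∧ W ≤ A) ∧ W ≤ H := by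
    intro W
    rw [hP1]
    simp only [Finset.mem_filter, Finset.mem_univ, true_and]
  have hmemP2 : ∀ W : SMod d, W ∈ P2 ↔ (U ≤ W ∧ W ≤ A) ∧ ¬ W ≤ H := by
    intro W
    rw [hP2]
    simp only [Finset.mem_filter, Finset.mem_univ, true_and]
  have hmaps : ∀ W ∈ P2, W ⊓ H ∈ P1 := by
    intro W hW
    rw [hmemP2] at hW
    obtain ⟨⟨hUW, hWA⟩, hWH⟩ := hW
    rw [hmemP1]
    exact ⟨⟨le_inf hUW hUk, inf_le_left.trans hWA⟩, inf_le_right⟩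
  have hsum2 : ∑ W ∈ P2, wt (frk A - frk W)
      = ∑ W' ∈ P1, 2 ^ (frk A - 1 - frk W') * wt (frk A - 1 - frk W') := by
    rw [← Finset.sum_fiberwise_of_maps_to hmaps (fun W => wt (frk A - frk W))]
    apply Finset.sum_congr rfl
    intro W' hW'
    rw [hmemP1] at hW'
    obtain ⟨⟨hUW', hW'A⟩, hW'H⟩ := hW'
    have hfibeq : P2.filter (fun W => W ⊓ H = W')
        = (univ : Finset (SMod d)).filter (fun W => W ≤ A ∧ ¬ W ≤ H ∧ W ⊓ H = W') := by
      ext W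
      simp only [Finset.mem_filter, Finset.mem_univ, true_and]
      rw [hmemP2]
      constructor
      · rintro ⟨⟨⟨hUW, hWA⟩, hWH⟩, hinf⟩
        exact ⟨hWA, hWH, hinf⟩
      · rintro ⟨hWA, hWH, hinf⟩
        exact ⟨⟨⟨hUW'.trans (hinf ▸ inf_le_left), hWA⟩, hWH⟩, hinf⟩
    have hcard := fiber_count A φ v hvA hv1 W' hW'A hW'H
    have hconst : ∀ W ∈ P2.filter (fun W => W ⊓ H = W'),
        wt (frk A - frk W) = wt (frk A - 1 - frk W') := by
      intro W hW
      rw [hfibeq, Finset.mem_filter] at hW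
      obtain ⟨-, hWA, hWH, hinf⟩ := hW
      obtain ⟨x, hxW, hxH⟩ := SetLike.not_le_iff_exists.mp hWH
      have hx1 : φ x = 1 := zmod2_ne_zero (fun h => hxH ((LinearMap.mem_ker).mpr h))
      have hfr : frk W = frk W' + 1 := by
        have := rank_inf_ker hxW hx1
        rwa [← hH, hinf] at this
      have hle : frk W' + 1 ≤ frk A := by
        have h3 : frk W' ≤ frk (A ⊓ H) := Submodule.finrank_mono (le_inf hW'A hW'H)
        omega
      congr 1
      omega
    rw [Finset.sum_congr rfl hconst, Finset.sum_const, hfibeq, nsmul_eq_mul]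
    have hle : frk W' + 1 ≤ frk A := by
      have h3 : frk W' ≤ frk (A ⊓ H) := Submodule.finrank_mono (le_inf hW'A hW'H)
      omega
    have hcardeq : ((univ : Finset (SMod d)).filter
        (fun W => W ≤ A ∧ ¬ W ≤ H ∧ W ⊓ H = W')).card = 2 ^ (frk A - 1 - frk W') := by
      have h2 : (2:ℕ) ^ (frk A - 1) = 2 ^ (frk A - 1 - frk W') * 2 ^ frk W' := by
        rw [← pow_add]
        congr 1
        omega
      rw [h2] at hcard
      exact Nat.eq_of_mul_eq_mul_right (pow_pos (by norm_num) _) hcard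
    rw [hcardeq]
    push_cast
    ring
  have hsum1 : ∑ W ∈ P1, wt (frk A - frk W)
      = ∑ W' ∈ P1, wt (frk A - 1 - frk W' + 1) := by
    apply Finset.sum_congr rfl
    intro W' hW'
    rw [hmemP1] at hW'
    obtain ⟨⟨hUW', hW'A⟩, hW'H⟩ := hW'
    have h3 : frk W' ≤ frk (A ⊓ H) := Submodule.finrank_mono (le_inf hW'A hW'H)
    congr 1
    omega
  rw [hsum1, hsum2, ← Finset.sum_add_distrib]
  apply Finset.sum_eq_zero
  intro W' hW'
  rw [wt_succ]
  ring

lemma sum_wt_top :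
    ∑ W ∈ (univ : Finset (SMod d)).filter (fun W => (⊤ : SMod d) ≤ W ∧ W ≤ ⊤),
      wt (frk (⊤ : SMod d) - frk W) = 1 := by
  have h : (univ : Finset (SMod d)).filter (fun W => (⊤ : SMod d) ≤ W ∧ W ≤ ⊤) = {⊤} := by
    ext W
    simp [top_le_iff, eq_comm]
  rw [h, Finset.sum_singleton, Nat.sub_self, wt]
  norm_num


lemma frk_eq_zero_iff {W : SMod d} : frk W = 0 ↔ W = ⊥ := Submodule.finrank_eq_zero

lemma cnt : ∀ (k : ℕ) (A : SMod d), frk A = k → ∀ c : ℕ,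
    ((univ : Finset (SMod d)).filter (fun W => W ≤ A ∧ frk W = c)).card
      ≤ 2 ^ (c * (k - c) + c) := by
  intro k
  induction k with
  | zero =>
    intro A hA c
    rcases c with _ | c
    · -- c = 0 : filter ⊆ {⊥}
      apply le_trans (Finset.card_le_card (fun W hW => ?_)) (Finset.card_singleton (⊥ : SMod d)).le
      rw [Finset.mem_filter] at hW
      rw [Finset.mem_singleton]
      exact frk_eq_zero_iff.mp hW.2.2
    · -- c ≥ 1 : empty
      have : (univ : Finset (SMod d)).filter (fun W => W ≤ A ∧ frk W = c + 1) = ∅ := by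
        apply Finset.filter_false_of_mem
        intro W _
        rintro ⟨hWA, hfr⟩
        have : frk W ≤ frk A := Submodule.finrank_mono hWA
        omega
      rw [this]
      simp
  | succ k ih =>
    intro A hA c
    have hAbot : A ≠ ⊥ := by
      intro h
      rw [h] at hA
      rw [frk, finrank_bot] at hA
      omega
    obtain ⟨x₀, hx₀A, hx₀ne⟩ := (Submodule.ne_bot_iff A).mp hAbot
    obtain ⟨φ, -, hx₀⟩ := exists_functional ⊥ x₀ (by simpa using hx₀ne)
    set H := LinearMap.ker φ with hH
    set A' := A ⊓ H with hA'def
    have hA' : frk A' = k := by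
      have h0 := rank_inf_ker hx₀A hx₀
      rw [← hH, ← hA'def] at h0
      omega
    -- split
    have hsplit := Finset.card_filter_add_card_filter_not
      (s := (univ : Finset (SMod d)).filter (fun W => W ≤ A ∧ frk W = c))
      (p := fun W => W ≤ H)
    rw [Finset.filter_filter, Finset.filter_filter] at hsplit
    -- part 1
    have hpart1 : ((univ : Finset (SMod d)).filter (fun W => (W ≤ A ∧ frk W = c) ∧ W ≤ H)).card
        ≤ 2 ^ (c * (k - c) + c) := by
      have heq : (univ : Finset (SMod d)).filter (fun W => (W ≤ A ∧ frk W = c) ∧ W ≤ H)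
          = (univ : Finset (SMod d)).filter (fun W => W ≤ A' ∧ frk W = c) := by
        ext W
        simp only [Finset.mem_filter, Finset.mem_univ, true_and, hA'def, le_inf_iff]
        tauto
      rw [heq]
      exact ih A' hA' c
    -- part 2
    have hpart2 : ((univ : Finset (SMod d)).filter
          (fun W => (W ≤ A ∧ frk W = c) ∧ ¬ W ≤ H)).card
        ≤ 2 ^ (k + 1 - c) * 2 ^ ((c-1) * (k - (c-1)) + (c-1)) := by
      rcases c with _ | c'
      · -- c = 0 : empty
        have : (univ : Finset (SMod d)).filter
            (fun W => (W ≤ A ∧ frk W = 0) ∧ ¬ W ≤ H) = ∅ := by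
          apply Finset.filter_false_of_mem
          intro W _
          rintro ⟨⟨hWA, hfr⟩, hWH⟩
          exact hWH (frk_eq_zero_iff.mp hfr ▸ bot_le)
        rw [this]
        simp
      · -- c = c' + 1
        have hmaps : ∀ W ∈ (univ : Finset (SMod d)).filter
            (fun W => (W ≤ A ∧ frk W = c' + 1) ∧ ¬ W ≤ H),
            W ⊓ H ∈ (univ : Finset (SMod d)).filter (fun W => W ≤ A' ∧ frk W = c') := by
          intro W hW
          rw [Finset.mem_filter] at hW
          obtain ⟨-, ⟨hWA, hfr⟩, hWH⟩ := hW
          obtain ⟨x, hxW, hxH⟩ := SetLike.not_le_iff_exists.mp hWH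
          have hx1 : φ x = 1 := zmod2_ne_zero (fun h => hxH ((LinearMap.mem_ker).mpr h))
          have hfr2 := rank_inf_ker hxW hx1
          rw [← hH] at hfr2
          rw [Finset.mem_filter]
          refine ⟨Finset.mem_univ _, ?_, by omega⟩
          rw [hA'def]
          exact le_inf (inf_le_left.trans hWA) inf_le_right
        have hcount := Finset.card_eq_sum_card_fiberwise hmaps
        rw [hcount]
        have hbound : ∀ W' ∈ (univ : Finset (SMod d)).filter (fun W => W ≤ A' ∧ frk W = c'),
            (((univ : Finset (SMod d)).filter
              (fun W => (W ≤ A ∧ frk W = c' + 1) ∧ ¬ W ≤ H)).filter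
                (fun W => W ⊓ H = W')).card = 2 ^ (k - c') := by
          intro W' hW'
          rw [Finset.mem_filter] at hW'
          obtain ⟨-, hW'A', hfrW'⟩ := hW'
          have hW'A : W' ≤ A := hW'A'.trans inf_le_left
          have hW'H : W' ≤ H := hW'A'.trans inf_le_right
          have hfibeq : ((univ : Finset (SMod d)).filter
              (fun W => (W ≤ A ∧ frk W = c' + 1) ∧ ¬ W ≤ H)).filter (fun W => W ⊓ H = W')
              = (univ : Finset (SMod d)).filter (fun W => W ≤ A ∧ ¬ W ≤ H ∧ W ⊓ H = W') := by
            ext W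
            simp only [Finset.mem_filter, Finset.mem_univ, true_and]
            constructor
            · rintro ⟨⟨⟨hWA, hfr⟩, hWH⟩, hinf⟩
              exact ⟨hWA, hWH, hinf⟩
            · rintro ⟨hWA, hWH, hinf⟩
              obtain ⟨x, hxW, hxH⟩ := SetLike.not_le_iff_exists.mp hWH
              have hx1 : φ x = 1 := zmod2_ne_zero (fun h => hxH ((LinearMap.mem_ker).mpr h))
              have hfr2 := rank_inf_ker hxW hx1
              rw [← hH, hinf] at hfr2
              exact ⟨⟨⟨hWA, by omega⟩, hWH⟩, hinf⟩
          rw [hfibeq]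
          have hcard := fiber_count A φ x₀ hx₀A hx₀ W' hW'A hW'H
          have hc'k : frk W' ≤ frk A' := Submodule.finrank_mono hW'A'
          have h2 : (2:ℕ) ^ (frk A - 1) = 2 ^ (k - c') * 2 ^ frk W' := by
            rw [← pow_add]
            congr 1
            omega
          rw [h2] at hcard
          exact Nat.eq_of_mul_eq_mul_right (pow_pos (by norm_num) _) hcard
        rw [Finset.sum_congr rfl hbound, Finset.sum_const, smul_eq_mul]
        have := ih A' hA' c'
        have hle : k + 1 - (c' + 1) = k - c' := by omega
        calc ((univ : Finset (SMod d)).filter (fun W => W ≤ A' ∧ frk W = c')).card * 2 ^ (k - c')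
            ≤ 2 ^ (c' * (k - c') + c') * 2 ^ (k - c') := by
              exact Nat.mul_le_mul_right _ this
          _ = 2 ^ (k + 1 - (c' + 1)) * 2 ^ ((c' + 1 - 1) * (k - (c' + 1 - 1)) + (c' + 1 - 1)) := by
              rw [← pow_add, ← pow_add]
              simp only [Nat.add_sub_cancel]
              congr 1
              omega
    -- combine the two parts
    rcases Nat.lt_or_ge k (c - 1) with hc | hc
    · -- c > k + 1 : the filter is empty
      have hemp : (univ : Finset (SMod d)).filter (fun W => W ≤ A ∧ frk W = c) = ∅ := by
        apply Finset.filter_false_of_mem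
        intro W _
        rintro ⟨hWA, hfr⟩
        have h4 : frk W ≤ frk A := Submodule.finrank_mono hWA
        omega
      rw [hemp]
      simp
    · rcases c with _ | a
      · -- c = 0
        have hcard : ((univ : Finset (SMod d)).filter
            (fun W => W ≤ A ∧ frk W = 0)).card ≤ 1 := by
          apply le_trans (Finset.card_le_card (fun W hW => ?_))
            (Finset.card_singleton (⊥ : SMod d)).le
          rw [Finset.mem_filter] at hW
          rw [Finset.mem_singleton]
          exact frk_eq_zero_iff.mp hW.2.2
        simpa using hcard
      · -- c = a + 1 with a ≤ k
        obtain ⟨u, hu⟩ : ∃ u, k = a + u := ⟨k - a, by omega⟩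
        subst hu
        rcases u with _ | u'
        · -- c = k + 1 (u = 0) : part 1 empty
          have hp1 : ((univ : Finset (SMod d)).filter
              (fun W => (W ≤ A ∧ frk W = a + 1) ∧ W ≤ H)).card = 0 := by
            rw [Finset.card_eq_zero]
            apply Finset.filter_false_of_mem
            intro W _
            rintro ⟨⟨hWA, hfr⟩, hWH⟩
            have h4 : frk W ≤ frk A' := by
              apply Submodule.finrank_mono
              rw [hA'def]
              exact le_inf hWA hWH
            omega
          have htot : ((univ : Finset (SMod d)).filter
                (fun W => W ≤ A ∧ frk W = a + 1)).card
              = ((univ : Finset (SMod d)).filter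
                (fun W => (W ≤ A ∧ frk W = a + 1) ∧ ¬ W ≤ H)).card := by
            omega
          rw [htot]
          refine le_trans hpart2 ?_
          simp only [Nat.add_sub_cancel, Nat.sub_self, Nat.add_sub_cancel_left,
            Nat.mul_zero, Nat.zero_add, pow_zero, one_mul]
          apply Nat.pow_le_pow_right (by norm_num)
          omega
        · -- c = a + 1 ≤ k : generic case
          set u := u' + 1 with hu'
          have he1 : (a + 1) * (a + u - (a + 1)) + (a + 1)
              = (a + 1) * u' + (a + 1) := by
            congr 2
            omega
          have he2 : (a + u + 1 - (a + 1)) + ((a + 1 - 1) * (a + u - (a + 1 - 1)) + (a + 1 - 1))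
              = u + (a * u + a) := by
            simp only [Nat.add_sub_cancel]
            congr 2
            · omega
            · congr 2
              omega
          have hE : (a + 1) * (a + u + 1 - (a + 1)) + (a + 1) = (u + (a * u + a)) + 1 := by
            have h5 : a + u + 1 - (a + 1) = u := by omega
            rw [h5]
            ring
          rw [hE]
          rw [he1] at hpart1
          have hpart2' : ((univ : Finset (SMod d)).filter
              (fun W => (W ≤ A ∧ frk W = a + 1) ∧ ¬ W ≤ H)).card ≤ 2 ^ (u + (a * u + a)) := by
            refine le_trans hpart2 ?_
            rw [← pow_add, he2]
          have hle1 : (a + 1) * u' + (a + 1) ≤ u + (a * u + a) := by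
            rw [hu']
            nlinarith
          have h2E : (2:ℕ) ^ ((u + (a * u + a)) + 1) = 2 ^ (u + (a * u + a)) + 2 ^ (u + (a * u + a)) := by
            rw [pow_succ]
            omega
          rw [h2E]
          have hp1' : ((univ : Finset (SMod d)).filter
              (fun W => (W ≤ A ∧ frk W = a + 1) ∧ W ≤ H)).card ≤ 2 ^ (u + (a * u + a)) :=
            le_trans hpart1 (Nat.pow_le_pow_right (by norm_num) hle1)
          omega

lemma total_count (hd : 1 ≤ d) :
    (univ : Finset (SMod d)).card ≤ (d + 1) * 2 ^ (d * d / 4 + d) := by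
  have hmaps : ∀ W ∈ (univ : Finset (SMod d)), frk W ∈ Finset.range (d + 1) := by
    intro W _
    rw [Finset.mem_range]
    exact Nat.lt_succ_of_le (frk_le W)
  have hcount := Finset.card_eq_sum_card_fiberwise hmaps
  rw [hcount]
  have hbound : ∀ c ∈ Finset.range (d + 1),
      ((univ : Finset (SMod d)).filter (fun W => frk W = c)).card ≤ 2 ^ (d * d / 4 + d) := by
    intro c hc
    rw [Finset.mem_range] at hc
    have heq : (univ : Finset (SMod d)).filter (fun W => frk W = c)
        = (univ : Finset (SMod d)).filter (fun W => W ≤ ⊤ ∧ frk W = c) := by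
      ext W
      simp
    rw [heq]
    refine le_trans (cnt d ⊤ frk_top c) ?_
    apply Nat.pow_le_pow_right (by norm_num)
    -- c * (d - c) + c ≤ d*d/4 + d
    have h4 : 4 * (c * (d - c)) ≤ d * d := by
      obtain ⟨b, hb⟩ : ∃ b, d = c + b := ⟨d - c, by omega⟩
      subst hb
      have hsq := two_mul_le_add_sq c b
      have hexp : c + b - c = b := by omega
      rw [hexp]
      nlinarith
    have h5 : c * (d - c) ≤ d * d / 4 := Nat.le_div_iff_mul_le (by norm_num) |>.mpr (by omega)
    omega
  refine le_trans (Finset.sum_le_sum hbound) ?_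
  rw [Finset.sum_const, Finset.card_range, smul_eq_mul]


lemma main_d (d : ℕ) (hd : 2 ≤ d) :
    ∃ (n : ℕ) (S : Type) (F : Fin n → Set S),
      (2 ^ d - 1 ≤ (venn F).ncard) ∧ ((venn F).ncard ≤ (d + 1) * 2 ^ (d * d / 4 + d)) ∧
      ∀ x : Finset (Fin n) → ℝ, IsIEVector F x →
        (2 : ℝ) ^ (d.choose 2) ≤ ∑ σ ∈ Finset.univ.filter (· ∈ nerve F), |x σ| := by
  have hcard : Fintype.card (Vd d) = 2 ^ d := by
    rw [Fintype.card_fun, ZMod.card, Fintype.card_fin]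
  set e : Fin (2 ^ d) ≃ Vd d := (Fintype.equivFinOfCardEq hcard).symm with he
  set F : Fin (2 ^ d) → Set (SMod d) := fun i => {W : SMod d | e i ∈ W ∧ e i ≠ 0} with hF
  set τf : SMod d → Finset (Fin (2 ^ d)) :=
    fun W => univ.filter (fun i => e i ∈ W ∧ e i ≠ 0) with hτ
  have hmemτ : ∀ (W : SMod d) i, i ∈ τf W ↔ (e i ∈ W ∧ e i ≠ 0) := by
    intro W i
    rw [hτ]
    simp
  have hregion : ∀ (W : SMod d) (τ0 : Finset (Fin (2 ^ d))), W ∈ region F τ0 ↔ τ0 = τf W := by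
    intro W τ0
    unfold region
    rw [Set.mem_diff]
    constructor
    · rintro ⟨h1, h2⟩
      rw [Set.mem_iInter₂] at h1
      ext i
      rw [hmemτ]
      constructor
      · intro hi
        exact h1 i hi
      · intro hi
        by_contra hiτ
        exact h2 (Set.mem_iUnion₂.mpr ⟨i, hiτ, hi⟩)
    · rintro rfl
      constructor
      · rw [Set.mem_iInter₂]
        intro i hi
        exact (hmemτ W i).mp hi
      · intro hcon
        obtain ⟨i, hiτ, hiF⟩ := Set.mem_iUnion₂.mp hcon
        exact hiτ ((hmemτ W i).mpr hiF)
  have hvenn : venn F = τf '' {W : SMod d | W ≠ ⊥} := by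
    ext τ0
    constructor
    · rintro ⟨hne, W, hW⟩
      have h0 := (hregion W τ0).mp hW
      refine ⟨W, ?_, h0.symm⟩
      obtain ⟨i, hi⟩ := hne
      rw [h0, hmemτ] at hi
      exact (Submodule.ne_bot_iff W).mpr ⟨e i, hi.1, hi.2⟩
    · rintro ⟨W, hWne, rfl⟩
      obtain ⟨v, hvW, hvne⟩ := (Submodule.ne_bot_iff W).mp hWne
      constructor
      · refine ⟨e.symm v, ?_⟩
        rw [hmemτ, e.apply_symm_apply]
        exact ⟨hvW, hvne⟩
      · exact ⟨W, (hregion W (τf W)).mpr rfl⟩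
  have hτinj : Function.Injective τf := by
    intro W W' h
    ext v
    by_cases hv : v = 0
    · simp [hv, Submodule.zero_mem]
    · have h1 := hmemτ W (e.symm v)
      have h2 := hmemτ W' (e.symm v)
      rw [e.apply_symm_apply] at h1 h2
      constructor
      · intro hvW
        exact (h2.mp (h ▸ h1.mpr ⟨hvW, hv⟩)).1
      · intro hvW'
        exact (h1.mp (h.symm ▸ h2.mpr ⟨hvW', hv⟩)).1
  have hncard : (venn F).ncard = Nat.card {W : SMod d // W ≠ ⊥} := by
    rw [hvenn, Set.ncard_image_of_injective _ hτinj]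
    exact (Nat.card_coe_set_eq _).symm
  refine ⟨2 ^ d, SMod d, F, ?_, ?_, ?_⟩
  · -- lower bound on ncard
    rw [hncard]
    have hinj : Function.Injective (fun v : {v : Vd d // v ≠ 0} =>
        (⟨Submodule.span (ZMod 2) {v.val}, by
          apply (Submodule.ne_bot_iff _).mpr
          exact ⟨v.val, Submodule.subset_span rfl, v.prop⟩⟩ : {W : SMod d // W ≠ ⊥})) := by
      intro v v' h
      rw [Subtype.mk.injEq] at h
      have h1 : v.val ∈ Submodule.span (ZMod 2) {v'.val} := by
        rw [← h]
        exact Submodule.subset_span rfl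
      obtain ⟨a, ha⟩ := Submodule.mem_span_singleton.mp h1
      rcases zmod2_cases a with ha0 | ha1
      · rw [ha0, zero_smul] at ha
        exact absurd ha.symm v.prop
      · rw [ha1, one_smul] at ha
        exact Subtype.ext ha.symm
    have hle := Nat.card_le_card_of_injective _ hinj
    have hcards : Nat.card {v : Vd d // v ≠ 0} = 2 ^ d - 1 := by
      rw [Nat.card_eq_fintype_card]
      have h2 := Fintype.card_subtype_compl (fun v : Vd d => v = 0)
      rw [Fintype.card_subtype_eq (0 : Vd d), hcard] at h2
      exact h2
    omega
  · -- upper bound on ncard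
    rw [hncard, Nat.card_eq_fintype_card]
    refine le_trans (Fintype.card_subtype_le _) ?_
    rw [← Finset.card_univ]
    exact total_count (by omega)
  · -- dual bound
    intro x hx
    set DD := (univ : Finset (SMod d)).filter (fun W => W ≠ ⊥) with hDD
    set yy : SMod d → ℝ := fun W => (-1) ^ (d + 1) * wt (d - frk W) with hyy
    have hfrbot : frk (⊥ : SMod d) = 0 := by
      rw [frk]
      exact finrank_bot _ _
    have hbotne : (⊥ : SMod d) ≠ ⊤ := by
      intro h
      have h1 := hfrbot
      rw [h, frk_top] at h1
      omega
    have hall : ∑ W ∈ (univ : Finset (SMod d)), wt (d - frk W) = 0 := by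
      have h0 := sum_wt_zero (⊥ : SMod d) ⊤ bot_le hbotne
      have heq : (univ : Finset (SMod d)).filter (fun W => ⊥ ≤ W ∧ W ≤ ⊤) = univ := by
        apply Finset.filter_true_of_mem
        intro W _
        exact ⟨bot_le, le_top⟩
      rw [heq, frk_top] at h0
      exact h0
    have hDD' : DD = univ.erase ⊥ := by
      rw [hDD]
      exact Finset.filter_ne' univ ⊥
    have hsumDD : ∑ W ∈ DD, yy W = 2 ^ (d.choose 2) := by
      have h2 : ∑ W ∈ univ.erase ⊥, wt (d - frk W) + wt (d - frk (⊥ : SMod d))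
          = ∑ W ∈ (univ : Finset (SMod d)), wt (d - frk W) :=
        Finset.sum_erase_add univ (fun W : SMod d => wt (d - frk W))
          (Finset.mem_univ (⊥ : SMod d))
      rw [hall, hfrbot, Nat.sub_zero] at h2
      have h1 : ∑ W ∈ DD, wt (d - frk W) = - wt d := by
        rw [hDD']
        linarith
      have h3 : ∑ W ∈ DD, yy W = (-1 : ℝ) ^ (d + 1) * ∑ W ∈ DD, wt (d - frk W) := by
        rw [hyy, Finset.mul_sum]
      rw [h3, h1, wt, pow_succ]
      have hsq : ((-1 : ℝ)) ^ d * (-1) ^ d = 1 := by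
        rw [← pow_add]
        exact Even.neg_one_pow ⟨d, rfl⟩
      calc (-1 : ℝ) ^ d * (-1) * -((-1) ^ d * 2 ^ d.choose 2)
          = ((-1) ^ d * (-1) ^ d) * 2 ^ d.choose 2 := by ring
        _ = 2 ^ d.choose 2 := by rw [hsq, one_mul]
    have hnerve : ∀ σ : Finset (Fin (2 ^ d)),
        σ ∈ nerve F ↔ (σ.Nonempty ∧ ∀ i ∈ σ, e i ≠ 0) := by
      intro σ
      constructor
      · rintro ⟨hne, W0, hW0⟩
        rw [Set.mem_iInter₂] at hW0
        exact ⟨hne, fun i hi => (hW0 i hi).2⟩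
      · rintro ⟨hne, h0⟩
        refine ⟨hne, ⟨⊤, ?_⟩⟩
        rw [Set.mem_iInter₂]
        intro i hi
        exact ⟨Submodule.mem_top, h0 i hi⟩
    set KK := (univ : Finset (Finset (Fin (2 ^ d)))).filter (· ∈ nerve F) with hKK
    have h1 : ∀ W ∈ DD, (∑ σ ∈ (τf W).powerset.filter (· ∈ nerve F), x σ) = 1 := by
      intro W hW
      apply hx.2
      rw [hvenn]
      rw [hDD, Finset.mem_filter] at hW
      exact ⟨W, hW.2, rfl⟩
    have hstep1 : (2 : ℝ) ^ (d.choose 2)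
        = ∑ W ∈ DD, ∑ σ ∈ (τf W).powerset.filter (· ∈ nerve F), yy W * x σ := by
      rw [← hsumDD]
      apply Finset.sum_congr rfl
      intro W hW
      rw [← Finset.mul_sum, h1 W hW, mul_one]
    have hswap : ∑ W ∈ DD, ∑ σ ∈ (τf W).powerset.filter (· ∈ nerve F), yy W * x σ
        = ∑ σ ∈ KK, ∑ W ∈ DD.filter (fun W => σ ⊆ τf W), yy W * x σ := by
      apply Finset.sum_comm'
      intro W σ
      simp only [hDD, hKK, Finset.mem_filter, Finset.mem_univ, true_and,
        Finset.mem_powerset]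
      tauto
    have hinner : ∀ σ ∈ KK, |∑ W ∈ DD.filter (fun W => σ ⊆ τf W), yy W| ≤ 1 := by
      intro σ hσ
      rw [hKK, Finset.mem_filter] at hσ
      obtain ⟨-, hσn⟩ := hσ
      rw [hnerve] at hσn
      obtain ⟨hσne, hσ0⟩ := hσn
      set U := Submodule.span (ZMod 2) (↑(σ.image (fun i => e i)) : Set (Vd d)) with hU
      have hfeq : DD.filter (fun W => σ ⊆ τf W)
          = (univ : Finset (SMod d)).filter (fun W => U ≤ W ∧ W ≤ ⊤) := by
        ext W
        simp only [hDD, Finset.mem_filter, Finset.mem_univ, true_and, le_top, and_true]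
        constructor
        · rintro ⟨hWb, hsub⟩
          rw [hU]
          apply Submodule.span_le.mpr
          intro v hv
          rw [Finset.mem_coe, Finset.mem_image] at hv
          obtain ⟨i, hi, rfl⟩ := hv
          exact ((hmemτ W i).mp (hsub hi)).1
        · intro hle
          have hmem : ∀ i ∈ σ, e i ∈ W := by
            intro i hi
            refine hle (Submodule.subset_span ?_)
            rw [Finset.mem_coe, Finset.mem_image]
            exact ⟨i, hi, rfl⟩
          obtain ⟨i0, hi0⟩ := hσne
          refine ⟨(Submodule.ne_bot_iff W).mpr ⟨e i0, hmem i0 hi0, hσ0 i0 hi0⟩, ?_⟩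
          intro i hi
          rw [hmemτ]
          exact ⟨hmem i hi, hσ0 i hi⟩
      rw [hfeq]
      have hyysum : ∑ W ∈ (univ : Finset (SMod d)).filter (fun W => U ≤ W ∧ W ≤ ⊤), yy W
          = (-1 : ℝ) ^ (d + 1) * ∑ W ∈ (univ : Finset (SMod d)).filter
              (fun W => U ≤ W ∧ W ≤ ⊤), wt (d - frk W) := by
        rw [hyy, Finset.mul_sum]
      by_cases hUtop : U = ⊤
      · have htop := sum_wt_top (d := d)
        rw [frk_top] at htop
        rw [hyysum, hUtop, htop, mul_one, abs_pow, abs_neg, abs_one, one_pow]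
      · have h0 := sum_wt_zero U ⊤ le_top hUtop
        rw [frk_top] at h0
        rw [hyysum, h0, mul_zero, abs_zero]
        norm_num
    rw [hKK] at hinner ⊢
    calc (2 : ℝ) ^ (d.choose 2)
        = ∑ σ ∈ Finset.univ.filter (· ∈ nerve F),
            ∑ W ∈ DD.filter (fun W => σ ⊆ τf W), yy W * x σ := by
          rw [hstep1, hswap, hKK]
      _ ≤ |∑ σ ∈ Finset.univ.filter (· ∈ nerve F),
            ∑ W ∈ DD.filter (fun W => σ ⊆ τf W), yy W * x σ| := le_abs_self _
      _ ≤ ∑ σ ∈ Finset.univ.filter (· ∈ nerve F),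
            |∑ W ∈ DD.filter (fun W => σ ⊆ τf W), yy W * x σ| :=
          Finset.abs_sum_le_sum_abs _ _
      _ ≤ ∑ σ ∈ Finset.univ.filter (· ∈ nerve F), |x σ| := by
          apply Finset.sum_le_sum
          intro σ hσ
          rw [← Finset.sum_mul, abs_mul]
          calc |∑ W ∈ DD.filter (fun W => σ ⊆ τf W), yy W| * |x σ|
              ≤ 1 * |x σ| := by
                apply mul_le_mul_of_nonneg_right (hinner σ hσ) (abs_nonneg _)
            _ = |x σ| := one_mul _

end IEAux

/-- for every `ε > 0` there is `c > 0` such that for every `M` there are a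
family of `n` sets whose Venn diagram has size `m ≥ M` and such that every IE-vector has
`ℓ₁`-norm at least `c·m^(2-ε)`. -/
theorem stmt2 (ε : ℝ) (hε : 0 < ε) :
    ∃ c : ℝ, 0 < c ∧ ∀ M : ℕ,
      ∃ (n : ℕ) (S : Type) (F : Fin n → Set S),
        M ≤ (venn F).ncard ∧
        ∀ x : Finset (Fin n) → ℝ, IsIEVector F x →
          c * ((venn F).ncard : ℝ) ^ ((2 : ℝ) - ε) ≤
            ∑ σ ∈ Finset.univ.filter (· ∈ nerve F), |x σ| := by
  set ε' := min ε (1/2) with hε'def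
  have hε'pos : 0 < ε' := lt_min hε (by norm_num)
  have hε'le : ε' ≤ 1/2 := min_le_right _ _
  have hε'ε : ε' ≤ ε := min_le_left _ _
  obtain ⟨D₀, hD₀⟩ := exists_nat_ge (18 / ε')
  refine ⟨1, one_pos, ?_⟩
  intro M
  set d := max (max M D₀) 2 with hdd
  have hd2 : 2 ≤ d := le_max_right _ _
  have hdM : M ≤ d := le_trans (le_max_left _ _) (le_max_left _ _)
  have hdD₀ : D₀ ≤ d := le_trans (le_max_right _ _) (le_max_left _ _)
  obtain ⟨n, S, F, hlow, hup, hdual⟩ := main_d d hd2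
  refine ⟨n, S, F, ?_, ?_⟩
  · have h1 : d < 2 ^ d := (Nat.lt_two_pow_self (n := d))
    omega
  · intro x hx
    rw [one_mul]
    refine le_trans ?_ (hdual x hx)
    set m := (venn F).ncard with hm
    have hd1 : d < 2 ^ d := (Nat.lt_two_pow_self (n := d))
    have hm1 : (1 : ℝ) ≤ (m : ℝ) := by
      have h0 : 1 ≤ m := by omega
      exact_mod_cast h0
    have hnat : m ^ 4 ≤ 2 ^ (d * d + 8 * d) := by
      have h3 : m ^ 4 ≤ ((d + 1) * 2 ^ (d * d / 4 + d)) ^ 4 := Nat.pow_le_pow_left hup 4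
      have h4 : ((d + 1) * 2 ^ (d * d / 4 + d)) ^ 4
          = (d + 1) ^ 4 * 2 ^ ((d * d / 4 + d) * 4) := by
        rw [mul_pow, ← pow_mul]
      have h5 : (d + 1) ^ 4 ≤ (2 ^ d) ^ 4 := Nat.pow_le_pow_left (by omega) 4
      have h6 : (d * d / 4 + d) * 4 ≤ d * d + 4 * d := by
        have := Nat.div_mul_le_self (d * d) 4
        omega
      calc m ^ 4 ≤ (d + 1) ^ 4 * 2 ^ ((d * d / 4 + d) * 4) := by rw [← h4]; exact h3
        _ ≤ (2 ^ d) ^ 4 * 2 ^ (d * d + 4 * d) :=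
            Nat.mul_le_mul h5 (Nat.pow_le_pow_right (by norm_num) h6)
        _ = 2 ^ (d * d + 8 * d) := by
            rw [← pow_mul, ← pow_add]
            congr 1
            ring
    have hdR : (2:ℝ) ≤ (d:ℝ) := by exact_mod_cast hd2
    have hεd : 18 ≤ ε' * d := by
      have h7 : (18 / ε') ≤ (d : ℝ) := le_trans hD₀ (by exact_mod_cast hdD₀)
      calc (18:ℝ) = 18 / ε' * ε' := (div_mul_cancel₀ 18 hε'pos.ne').symm
        _ ≤ (d : ℝ) * ε' := mul_le_mul_of_nonneg_right h7 hε'pos.le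
        _ = ε' * d := mul_comm _ _
    have hexp : ((d * d + 8 * d : ℕ) : ℝ) * (((2:ℝ) - ε') / 4) ≤ (d.choose 2 : ℝ) := by
      rw [Nat.cast_choose_two]
      push_cast
      have h18d : 18 * (d:ℝ) ≤ (ε' * d) * d := by nlinarith
      nlinarith
    have hme : (m:ℝ) ^ ((2:ℝ) - ε) ≤ (m:ℝ) ^ ((2:ℝ) - ε') :=
      Real.rpow_le_rpow_of_exponent_le hm1 (by linarith)
    have h8 : (m:ℝ) ^ ((2:ℝ) - ε') = ((m:ℝ) ^ (4:ℕ)) ^ (((2:ℝ) - ε') / 4) := by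
      rw [← Real.rpow_natCast (m:ℝ) 4, ← Real.rpow_mul (by positivity)]
      congr 1
      ring
    have h9 : ((m:ℝ) ^ (4:ℕ)) ^ (((2:ℝ) - ε') / 4)
        ≤ ((2:ℝ) ^ (d * d + 8 * d : ℕ)) ^ (((2:ℝ) - ε') / 4) := by
      apply Real.rpow_le_rpow (by positivity) ?_ (by linarith)
      exact_mod_cast hnat
    have h10 : ((2:ℝ) ^ (d * d + 8 * d : ℕ)) ^ (((2:ℝ) - ε') / 4)
        ≤ (2:ℝ) ^ (d.choose 2) := by
      rw [← Real.rpow_natCast 2 (d * d + 8 * d), ← Real.rpow_mul (by norm_num),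
        ← Real.rpow_natCast 2 (d.choose 2)]
      exact Real.rpow_le_rpow_of_exponent_le (by norm_num) hexp
    calc (m:ℝ) ^ ((2:ℝ) - ε) ≤ (m:ℝ) ^ ((2:ℝ) - ε') := hme
      _ = ((m:ℝ) ^ (4:ℕ)) ^ (((2:ℝ) - ε') / 4) := h8
      _ ≤ ((2:ℝ) ^ (d * d + 8 * d : ℕ)) ^ (((2:ℝ) - ε') / 4) := h9
      _ ≤ (2:ℝ) ^ (d.choose 2) := h10
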